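/- Let T be a rooted binary phylogenetic tree on leaf set [n]. Let A_T be the integer matrix with rows indexed by {0} ∪ int(T) and columns indexed by Z^n_{2,even}, whose column for x ∈ Z^n_{2,even} is the exponent vector e_0 + Σ_{v ∈ top(x)} e_v of the monomial φ_T(q_x). Then A_T has rank n (the number of rows). -/

import Mathlib

/-- Rooted binary trees with leaves labeled by natural numbers. -/
inductive PhyloTree where
  | leaf : ℕ → PhyloTree
  | node : PhyloTree → PhyloTree → PhyloTree
deriving DecidableEq

namespace PhyloTree

/-- The set of leaf labels of a tree. -/
def leaves : PhyloTree → Finset ℕ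
  | leaf i => {i}
  | node l r => leaves l ∪ leaves r

/-- The list of leaf labels (left-to-right). -/
def leafList : PhyloTree → List ℕ
  | leaf i => [i]
  | node l r => leafList l ++ leafList r

/-- `t` is a rooted binary phylogenetic tree on leaf set `[n] = {0, …, n-1}`:
its leaves are bijectively labeled by `{0, …, n-1}`. -/
def IsPhylo (n : ℕ) (t : PhyloTree) : Prop :=
  t.leafList.Nodup ∧ t.leafList.toFinset = Finset.range n

/-- The subtrees of `t`; these are identified with the vertices of `t`. -/
def subtrees : PhyloTree → Finset PhyloTree
  | leaf i => {leaf i}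
  | node l r => insert (node l r) (subtrees l ∪ subtrees r)

/-- Whether the root of the tree is an internal (non-leaf) vertex. -/
def isInternal : PhyloTree → Bool
  | leaf _ => false
  | node _ _ => true

/-- The internal vertices of `t`, identified with the subtrees rooted at them. -/
def internalVertices (t : PhyloTree) : Finset PhyloTree :=
  t.subtrees.filter (fun s => s.isInternal)

/-- The most recent common ancestor of the leaves labeled `i` and `j`,
identified with the subtree rooted at it. -/
def mrca (t : PhyloTree) (i j : ℕ) : PhyloTree :=
  match t with
  | leaf a => leaf a
  | node l r =>
    if i ∈ l.leaves ∧ j ∈ l.leaves then mrca l i j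
    else if i ∈ r.leaves ∧ j ∈ r.leaves then mrca r i j
    else node l r

/-- The most recent common ancestor of a set `p` of leaf labels. -/
def mrcaSet (t : PhyloTree) (p : Finset ℕ) : PhyloTree :=
  match t with
  | leaf a => leaf a
  | node l r =>
    if p ⊆ l.leaves then mrcaSet l p
    else if p ⊆ r.leaves then mrcaSet r p
    else node l r

/-- A vertex (= subtree) is a top-most node of a path in the system of disjoint
paths `𝔓(x)` iff an odd number of elements of `x` lies below each of its two
children. -/
def isTopOf (x : Finset ℕ) : PhyloTree → Bool
  | leaf _ => false
  | node l r => decide (Odd (x ∩ l.leaves).card) && decide (Odd (x ∩ r.leaves).card)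

/-- `top(x)`: the set of top-most nodes of the paths in the system `𝔓(x)` of
pairwise disjoint paths joining the leaves in `x`. -/
def topSet (t : PhyloTree) (x : Finset ℕ) : Finset PhyloTree :=
  t.subtrees.filter (fun s => isTopOf x s)

/-- The vertices of the path in `t` between the leaves of the pair `p` (more
generally, the vertices of the smallest subtree of `t` spanning `p`). -/
def pathSet (t : PhyloTree) (p : Finset ℕ) : Finset PhyloTree :=
  (mrcaSet t p).subtrees.filter (fun s => ∃ ℓ ∈ p, ℓ ∈ s.leaves)

/-- `u` is a strict descendant of `w`. -/
def IsStrictDescendant (u w : PhyloTree) : Prop :=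
  u ≠ w ∧ u ∈ w.subtrees

end PhyloTree

/-- `ℤ₂ⁿ`-vectors with an even number of ones, encoded as even-size subsets of `Fin n`. -/
abbrev EvenSubsets (n : ℕ) := {x : Finset (Fin n) // Even x.card}

/-- Forget the bound `n`, regarding a set of coordinates as a set of leaf labels. -/
def EvenSubsets.toNat {n : ℕ} (x : EvenSubsets n) : Finset ℕ := x.1.image Fin.val

/-- The vector `1_{i,j}` with ones exactly in positions `i ≠ j`. -/
def pairIdx {n : ℕ} (i j : Fin n) (h : i ≠ j) : EvenSubsets n :=
  ⟨{i, j}, by rw [Finset.card_pair h]; exact ⟨1, rfl⟩⟩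

open MvPolynomial in
/-- The monomial map `φ_T : ℂ[q_x] → ℂ[b₀, b_v]`, `q_x ↦ b₀ ∏_{v ∈ top(x)} b_v`. -/
noncomputable def phiCFNMC (n : ℕ) (t : PhyloTree) :
    MvPolynomial (EvenSubsets n) ℂ →ₐ[ℂ] MvPolynomial (Option PhyloTree) ℂ :=
  aeval (fun x => X none * ∏ s ∈ t.topSet x.toNat, X (some s))

/-- The CFN-MC ideal `I_T = ker φ_T`. -/
noncomputable def cfnIdeal (n : ℕ) (t : PhyloTree) : Ideal (MvPolynomial (EvenSubsets n) ℂ) :=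
  RingHom.ker (phiCFNMC n t)

/-- The matrix `A_T` of the monomial map `φ_T`: rows indexed by `{0} ∪ int(T)`,
columns indexed by `Z^n₂,even`; the column for `x` is the exponent vector
`e₀ + ∑_{v ∈ top(x)} e_v` of the monomial `φ_T(q_x)`. -/
def cfnMatrix (n : ℕ) (t : PhyloTree) :
    Matrix (Option {s // s ∈ t.internalVertices}) (EvenSubsets n) ℤ :=
  fun v x =>
    match v with
    | none => 1
    | some v => if v.1 ∈ t.topSet x.toNat then 1 else 0


namespace PhyloTree

lemma leaves_nonempty (t : PhyloTree) : t.leaves.Nonempty := by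
  induction t with
  | leaf i => exact ⟨i, by simp [leaves]⟩
  | node l r ihl ihr => exact ihl.mono (by simp [leaves, Finset.subset_union_left])

lemma leafList_toFinset (t : PhyloTree) : t.leafList.toFinset = t.leaves := by
  induction t with
  | leaf i => simp [leafList, leaves]
  | node l r ihl ihr => simp [leafList, leaves, ihl, ihr]

lemma mem_subtrees_self (t : PhyloTree) : t ∈ t.subtrees := by
  cases t with
  | leaf i => simp [subtrees]
  | node l r => simp [subtrees]

lemma leaves_subset_of_mem_subtrees {s t : PhyloTree} (h : s ∈ t.subtrees) :
    s.leaves ⊆ t.leaves := by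
  induction t with
  | leaf i => simp [subtrees] at h; subst h; exact Finset.Subset.refl _
  | node l r ihl ihr =>
    simp only [subtrees, Finset.mem_insert, Finset.mem_union] at h
    rcases h with h | h | h
    · subst h; exact Finset.Subset.refl _
    · exact (ihl h).trans (by simp [leaves, Finset.subset_union_left])
    · exact (ihr h).trans (by simp [leaves, Finset.subset_union_right])

lemma nodup_node {l r : PhyloTree} (h : (node l r).leafList.Nodup) :
    l.leafList.Nodup ∧ r.leafList.Nodup ∧ Disjoint l.leaves r.leaves := by
  rw [leafList, List.nodup_append] at h
  refine ⟨h.1, h.2.1, ?_⟩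
  rw [← leafList_toFinset, ← leafList_toFinset, Finset.disjoint_left]
  intro a ha ha'
  simp only [List.mem_toFinset] at ha ha'
  exact h.2.2 a ha a ha' rfl

lemma nodup_of_mem_subtrees {s t : PhyloTree} (hnd : t.leafList.Nodup)
    (h : s ∈ t.subtrees) : s.leafList.Nodup := by
  induction t with
  | leaf i => simp [subtrees] at h; subst h; exact hnd
  | node l r ihl ihr =>
    obtain ⟨h1, h2, _⟩ := nodup_node hnd
    simp only [subtrees, Finset.mem_insert, Finset.mem_union] at h
    rcases h with h | h | h
    · subst h; exact hnd
    · exact ihl h1 h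
    · exact ihr h2 h

lemma disjoint_subtrees {l r : PhyloTree} (h : Disjoint l.leaves r.leaves) :
    Disjoint l.subtrees r.subtrees := by
  rw [Finset.disjoint_left]
  intro s hsl hsr
  obtain ⟨a, ha⟩ := leaves_nonempty s
  exact Finset.disjoint_left.mp h (leaves_subset_of_mem_subtrees hsl ha)
    (leaves_subset_of_mem_subtrees hsr ha)

lemma node_not_mem_subtrees_left {l r : PhyloTree} (h : Disjoint l.leaves r.leaves) :
    node l r ∉ l.subtrees := by
  intro hmem
  obtain ⟨a, ha⟩ := leaves_nonempty r
  have ha' : a ∈ (node l r).leaves := by simp [leaves, ha]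
  exact Finset.disjoint_left.mp h (leaves_subset_of_mem_subtrees hmem ha') ha

lemma node_not_mem_subtrees_right {l r : PhyloTree} (h : Disjoint l.leaves r.leaves) :
    node l r ∉ r.subtrees := by
  intro hmem
  obtain ⟨a, ha⟩ := leaves_nonempty l
  have ha' : a ∈ (node l r).leaves := by simp [leaves, ha]
  exact Finset.disjoint_left.mp h ha (leaves_subset_of_mem_subtrees hmem ha')

lemma card_internal (t : PhyloTree) (hnd : t.leafList.Nodup) :
    t.internalVertices.card + 1 = t.leaves.card := by
  induction t with
  | leaf i =>
    simp [internalVertices, subtrees, isInternal, leaves, Finset.filter_singleton]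
    exact Finset.filter_eq_empty_iff.mpr (fun s hs => by
      rw [Finset.mem_singleton] at hs; subst hs; simp)
  | node l r ihl ihr =>
    obtain ⟨h1, h2, hd⟩ := nodup_node hnd
    have hdisj : Disjoint l.internalVertices r.internalVertices :=
      (disjoint_subtrees hd).mono (Finset.filter_subset _ _) (Finset.filter_subset _ _)
    have hcard : (node l r).internalVertices =
        insert (node l r) (l.internalVertices ∪ r.internalVertices) := by
      rw [internalVertices, subtrees, Finset.filter_insert, Finset.filter_union]
      simp [isInternal, internalVertices]
    have hnotmem : node l r ∉ l.internalVertices ∪ r.internalVertices := by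
      simp only [Finset.mem_union, internalVertices, Finset.mem_filter, not_or]
      exact ⟨fun h => node_not_mem_subtrees_left hd h.1,
        fun h => node_not_mem_subtrees_right hd h.1⟩
    rw [hcard, Finset.card_insert_of_notMem hnotmem, Finset.card_union_of_disjoint hdisj]
    have hl : (node l r).leaves.card = l.leaves.card + r.leaves.card := by
      rw [leaves, Finset.card_union_of_disjoint hd]
    rw [hl, ← ihl h1, ← ihr h2]; ring

end PhyloTree

namespace PhyloTree

lemma topSet_empty (t : PhyloTree) : t.topSet ∅ = ∅ := by
  rw [topSet, Finset.filter_false_of_mem]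
  intro s _
  cases s with
  | leaf i => simp [isTopOf]
  | node a b => simp [isTopOf, Nat.odd_iff]

lemma isTopOf_node_iff {i j : ℕ} (hij : i ≠ j) {a b : PhyloTree}
    (hnd : (node a b).leafList.Nodup) :
    isTopOf {i, j} (node a b) = true ↔
      (i ∈ a.leaves ∧ j ∈ b.leaves) ∨ (j ∈ a.leaves ∧ i ∈ b.leaves) := by
  obtain ⟨_, _, hd⟩ := nodup_node hnd
  have key : ∀ c : PhyloTree, Odd (({i, j} : Finset ℕ) ∩ c.leaves).card ↔
      (({i, j} : Finset ℕ) ∩ c.leaves) = {i} ∨ (({i, j} : Finset ℕ) ∩ c.leaves) = {j} := by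
    intro c
    constructor
    · intro hodd
      have hsub : ({i, j} : Finset ℕ) ∩ c.leaves ⊆ {i, j} := Finset.inter_subset_left
      have hle : (({i, j} : Finset ℕ) ∩ c.leaves).card ≤ 2 := by
        calc _ ≤ ({i, j} : Finset ℕ).card := Finset.card_le_card hsub
        _ ≤ 2 := Finset.card_insert_le _ _ |>.trans (by simp)
      have h1 : (({i, j} : Finset ℕ) ∩ c.leaves).card = 1 := by
        rcases hodd with ⟨k, hk⟩; omega
      obtain ⟨a₀, ha₀⟩ := Finset.card_eq_one.mp h1
      have : a₀ ∈ ({i, j} : Finset ℕ) := hsub (ha₀ ▸ Finset.mem_singleton_self a₀)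
      simp only [Finset.mem_insert, Finset.mem_singleton] at this
      rcases this with rfl | rfl
      · exact Or.inl ha₀
      · exact Or.inr ha₀
    · rintro (h | h) <;> rw [h] <;> simp
  constructor
  · intro h
    rw [isTopOf, Bool.and_eq_true, decide_eq_true_eq, decide_eq_true_eq] at h
    rw [key, key] at h
    obtain ⟨ha, hb⟩ := h
    have mem_of : ∀ (k : ℕ) (c : PhyloTree), (({i, j} : Finset ℕ) ∩ c.leaves) = {k} →
        k ∈ c.leaves := by
      intro k c hc
      have : k ∈ ({i, j} : Finset ℕ) ∩ c.leaves := hc ▸ Finset.mem_singleton_self k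
      exact (Finset.mem_inter.mp this).2
    rcases ha with ha | ha <;> rcases hb with hb | hb
    · exact absurd (Finset.disjoint_left.mp hd (mem_of i a ha) (mem_of i b hb)) (by simp)
    · exact Or.inl ⟨mem_of i a ha, mem_of j b hb⟩
    · exact Or.inr ⟨mem_of j a ha, mem_of i b hb⟩
    · exact absurd (Finset.disjoint_left.mp hd (mem_of j a ha) (mem_of j b hb)) (by simp)
  · intro h
    rw [isTopOf, Bool.and_eq_true, decide_eq_true_eq, decide_eq_true_eq, key, key]
    rcases h with ⟨hi, hj⟩ | ⟨hj, hi⟩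
    · have hjna : j ∉ a.leaves := Finset.disjoint_right.mp hd hj
      have hinb : i ∉ b.leaves := Finset.disjoint_left.mp hd hi
      constructor
      · left; ext k; simp only [Finset.mem_inter, Finset.mem_insert, Finset.mem_singleton]
        constructor
        · rintro ⟨rfl | rfl, hk⟩
          · rfl
          · exact absurd hk hjna
        · rintro rfl; exact ⟨Or.inl rfl, hi⟩
      · right; ext k; simp only [Finset.mem_inter, Finset.mem_insert, Finset.mem_singleton]
        constructor
        · rintro ⟨rfl | rfl, hk⟩
          · exact absurd hk hinb
          · rfl
        · rintro rfl; exact ⟨Or.inr rfl, hj⟩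
    · have hina : i ∉ a.leaves := Finset.disjoint_right.mp hd hi
      have hjnb : j ∉ b.leaves := Finset.disjoint_left.mp hd hj
      constructor
      · right; ext k; simp only [Finset.mem_inter, Finset.mem_insert, Finset.mem_singleton]
        constructor
        · rintro ⟨rfl | rfl, hk⟩
          · exact absurd hk hina
          · rfl
        · rintro rfl; exact ⟨Or.inr rfl, hj⟩
      · left; ext k; simp only [Finset.mem_inter, Finset.mem_insert, Finset.mem_singleton]
        constructor
        · rintro ⟨rfl | rfl, hk⟩
          · rfl
          · exact absurd hk hjnb
        · rintro rfl; exact ⟨Or.inl rfl, hi⟩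

lemma mem_leaves_of_isTopOf {i j : ℕ} (hij : i ≠ j) {s : PhyloTree}
    (hnd : s.leafList.Nodup) (h : isTopOf {i, j} s = true) :
    i ∈ s.leaves ∧ j ∈ s.leaves := by
  cases s with
  | leaf a => simp [isTopOf] at h
  | node a b =>
    rw [isTopOf_node_iff hij hnd] at h
    rcases h with ⟨hi, hj⟩ | ⟨hj, hi⟩ <;>
      simp only [leaves, Finset.mem_union] <;> tauto

lemma isTopOf_unique (t : PhyloTree) (hnd : t.leafList.Nodup) {i j : ℕ} (hij : i ≠ j) :
    ∀ s ∈ t.subtrees, ∀ s' ∈ t.subtrees,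
      isTopOf {i, j} s = true → isTopOf {i, j} s' = true → s = s' := by
  induction t with
  | leaf a =>
    intro s hs s' hs' h h'
    simp only [subtrees, Finset.mem_singleton] at hs
    subst hs; simp [isTopOf] at h
  | node l r ihl ihr =>
    obtain ⟨h1, h2, hd⟩ := nodup_node hnd
    -- helper: if node l r is top, then not both i,j under l (resp. r)
    have htop_not : ∀ c : PhyloTree, Odd (({i, j} : Finset ℕ) ∩ c.leaves).card →
        ¬ (({i, j} : Finset ℕ) ⊆ c.leaves) := by
      intro c hodd hsub
      rw [Finset.inter_eq_left.mpr hsub, Finset.card_pair hij] at hodd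
      simp [Nat.odd_iff] at hodd
    have hcross : ∀ s ∈ l.subtrees, isTopOf {i, j} s = true → ({i, j} : Finset ℕ) ⊆ l.leaves := by
      intro s hs h
      obtain ⟨hi, hj⟩ := mem_leaves_of_isTopOf hij (nodup_of_mem_subtrees h1 hs) h
      intro k hk
      simp only [Finset.mem_insert, Finset.mem_singleton] at hk
      rcases hk with rfl | rfl
      · exact leaves_subset_of_mem_subtrees hs hi
      · exact leaves_subset_of_mem_subtrees hs hj
    have hcross' : ∀ s ∈ r.subtrees, isTopOf {i, j} s = true → ({i, j} : Finset ℕ) ⊆ r.leaves := by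
      intro s hs h
      obtain ⟨hi, hj⟩ := mem_leaves_of_isTopOf hij (nodup_of_mem_subtrees h2 hs) h
      intro k hk
      simp only [Finset.mem_insert, Finset.mem_singleton] at hk
      rcases hk with rfl | rfl
      · exact leaves_subset_of_mem_subtrees hs hi
      · exact leaves_subset_of_mem_subtrees hs hj
    have hroot : ∀ s, isTopOf {i, j} (node l r) = true → s ∈ l.subtrees ∪ r.subtrees →
        isTopOf {i, j} s = true → False := by
      intro s hroot hs hstop
      rw [isTopOf, Bool.and_eq_true, decide_eq_true_eq, decide_eq_true_eq] at hroot
      rcases Finset.mem_union.mp hs with hs | hs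
      · exact htop_not l hroot.1 (hcross s hs hstop)
      · exact htop_not r hroot.2 (hcross' s hs hstop)
    intro s hs s' hs' h h'
    simp only [subtrees, Finset.mem_insert, Finset.mem_union] at hs hs'
    rcases hs with rfl | hs | hs <;> rcases hs' with rfl | hs' | hs'
    · rfl
    · exact absurd (hroot s' h (Finset.mem_union_left _ hs') h') id
    · exact absurd (hroot s' h (Finset.mem_union_right _ hs') h') id
    · exact absurd (hroot s h' (Finset.mem_union_left _ hs) h) id
    · exact ihl h1 s hs s' hs' h h'
    · exact (Finset.disjoint_left.mp hd (hcross s hs h (Finset.mem_insert_self i {j}))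
        (hcross' s' hs' h' (Finset.mem_insert_self i {j}))).elim
    · exact absurd (hroot s h' (Finset.mem_union_right _ hs) h) id
    · exact (Finset.disjoint_left.mp hd (hcross s' hs' h' (Finset.mem_insert_self i {j}))
        (hcross' s hs h (Finset.mem_insert_self i {j}))).elim
    · exact ihr h2 s hs s' hs' h h'

lemma topSet_pair (t : PhyloTree) (hnd : t.leafList.Nodup) {l r : PhyloTree}
    (hmem : node l r ∈ t.subtrees) {i j : ℕ} (hi : i ∈ l.leaves) (hj : j ∈ r.leaves) :
    t.topSet {i, j} = {node l r} := by
  have hndv := nodup_of_mem_subtrees hnd hmem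
  obtain ⟨_, _, hd⟩ := nodup_node hndv
  have hij : i ≠ j := fun h => Finset.disjoint_left.mp hd hi (h ▸ hj)
  have hvtop : isTopOf {i, j} (node l r) = true :=
    (isTopOf_node_iff hij hndv).mpr (Or.inl ⟨hi, hj⟩)
  ext s
  simp only [topSet, Finset.mem_filter, Finset.mem_singleton]
  constructor
  · rintro ⟨hs, htop⟩
    exact isTopOf_unique t hnd hij s hs (node l r) hmem htop hvtop
  · rintro rfl
    exact ⟨hmem, hvtop⟩

end PhyloTree

lemma exists_column (n : ℕ) (t : PhyloTree) (ht : PhyloTree.IsPhylo n t)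
    {v : PhyloTree} (hv : v ∈ t.internalVertices) :
    ∃ x : EvenSubsets n, t.topSet x.toNat = {v} := by
  obtain ⟨hvs, hvi⟩ := Finset.mem_filter.mp hv
  have hleaves : t.leaves = Finset.range n := by
    rw [← PhyloTree.leafList_toFinset]; exact ht.2
  cases v with
  | leaf a => simp [PhyloTree.isInternal] at hvi
  | node l r =>
    obtain ⟨i, hi⟩ := PhyloTree.leaves_nonempty l
    obtain ⟨j, hj⟩ := PhyloTree.leaves_nonempty r
    have hndv := PhyloTree.nodup_of_mem_subtrees ht.1 hvs
    obtain ⟨_, _, hd⟩ := PhyloTree.nodup_node hndv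
    have hij : i ≠ j := fun h => Finset.disjoint_left.mp hd hi (h ▸ hj)
    have hin : i < n := by
      have : i ∈ t.leaves := PhyloTree.leaves_subset_of_mem_subtrees hvs
        (by simp [PhyloTree.leaves, hi])
      rw [hleaves] at this; exact Finset.mem_range.mp this
    have hjn : j < n := by
      have : j ∈ t.leaves := PhyloTree.leaves_subset_of_mem_subtrees hvs
        (by simp [PhyloTree.leaves, hj])
      rw [hleaves] at this; exact Finset.mem_range.mp this
    refine ⟨pairIdx (⟨i, hin⟩ : Fin n) ⟨j, hjn⟩ (fun h => hij (congrArg Fin.val h)), ?_⟩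
    have htoNat : (pairIdx (⟨i, hin⟩ : Fin n) ⟨j, hjn⟩
        (fun h => hij (congrArg Fin.val h))).toNat = {i, j} := by
      simp [EvenSubsets.toNat, pairIdx, Finset.image_insert]
    rw [htoNat]
    exact PhyloTree.topSet_pair t ht.1 hvs hi hj

theorem cfnMatrix_rank' (n : ℕ) (t : PhyloTree) (ht : PhyloTree.IsPhylo n t) :
    (cfnMatrix n t).rank = n := by
  classical
  set V := {s // s ∈ t.internalVertices}
  -- the number of rows is n
  have hn1 : 1 ≤ n := by
    obtain ⟨a, ha⟩ := PhyloTree.leaves_nonempty t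
    rw [← PhyloTree.leafList_toFinset, ht.2, Finset.mem_range] at ha
    omega
  have hcardV : Fintype.card V = n - 1 := by
    rw [Fintype.card_coe]
    have := PhyloTree.card_internal t ht.1
    rw [← PhyloTree.leafList_toFinset, ht.2, Finset.card_range] at this
    omega
  have hcard : Fintype.card (Option V) = n := by
    rw [Fintype.card_option, hcardV]; omega
  -- choose columns
  have hex : ∀ v : V, ∃ x : EvenSubsets n, t.topSet x.toNat = {v.1} :=
    fun v => exists_column n t ht v.2
  choose colOf hcolOf using hex
  set c : Option V → EvenSubsets n := fun o =>
    o.elim ⟨∅, by simp⟩ colOf with hc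
  -- the square submatrix B
  set B : Matrix (Option V) (Option V) ℤ := fun ρ κ => cfnMatrix n t ρ (c κ) with hB
  -- selection matrix P
  set P : Matrix (EvenSubsets n) (Option V) ℤ :=
    fun x κ => if c κ = x then 1 else 0 with hP
  have hMP : cfnMatrix n t * P = B := by
    ext ρ κ
    rw [Matrix.mul_apply]
    simp only [hP, mul_ite, mul_one, mul_zero, hB]
    rw [Finset.sum_ite_eq Finset.univ (c κ) (fun x => cfnMatrix n t ρ x)]
    simp
  -- B is invertible: explicit inverse C
  have hEmptyToNat : EvenSubsets.toNat (n := n) ⟨∅, by simp⟩ = ∅ := by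
    simp [EvenSubsets.toNat]
  set C : Matrix (Option V) (Option V) ℤ := fun ρ κ =>
    match ρ, κ with
    | none, none => 1
    | none, some _ => -1
    | some _, none => 0
    | some w, some v => if w = v then 1 else 0 with hC
  have hBentry_none : ∀ ρ, B ρ none = if ρ = none then 1 else 0 := by
    intro ρ
    match ρ with
    | none => simp [hB, cfnMatrix]
    | some w =>
      simp only [hB, cfnMatrix, hc, Option.elim]
      rw [hEmptyToNat, PhyloTree.topSet_empty]
      simp
  have hBentry_some : ∀ ρ (v : V), B ρ (some v) =
      if ρ = some v ∨ ρ = none then 1 else 0 := by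
    intro ρ v
    match ρ with
    | none => simp [hB, cfnMatrix]
    | some w =>
      simp only [hB, cfnMatrix, hc, Option.elim]
      rw [hcolOf v]
      simp only [Finset.mem_singleton]
      by_cases h : w = v
      · subst h; simp [Subtype.ext_iff]
      · have : w.1 ≠ v.1 := fun hh => h (Subtype.ext hh)
        simp [this, h]
  have hBC : B * C = 1 := by
    ext ρ κ
    rw [Matrix.mul_apply, Fintype.sum_option]
    match κ with
    | none =>
      have h0 : ∀ v : V, B ρ (some v) * C (some v) none = 0 := fun v => by
        rw [show C (some v) none = 0 from rfl, mul_zero]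
      rw [Finset.sum_congr rfl (fun v _ => h0 v), Finset.sum_const_zero, add_zero]
      rw [hBentry_none ρ]
      match ρ with
      | none => simp [hC, Matrix.one_apply]
      | some w => simp [hC, Matrix.one_apply]
    | some v =>
      have h1 : C none (some v) = -1 := rfl
      have h2 : ∀ u : V, C (some u) (some v) = if u = v then 1 else 0 := fun u => rfl
      simp only [h1, h2, mul_ite, mul_one, mul_zero, mul_neg]
      rw [Finset.sum_ite_eq' Finset.univ v (fun u => B ρ (some u))]
      rw [hBentry_none ρ, hBentry_some ρ v]
      match ρ with
      | none => simp [Matrix.one_apply]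
      | some w =>
        by_cases h : w = v
        · subst h; simp [Matrix.one_apply]
        · simp [Matrix.one_apply, h]
  have hCB : C * B = 1 := mul_eq_one_comm.mp hBC
  have hunit : IsUnit B := ⟨⟨B, C, hBC, hCB⟩, rfl⟩
  have hrankB : B.rank = n := by
    rw [Matrix.rank_of_isUnit B hunit, hcard]
  have hle : (cfnMatrix n t).rank ≤ n := by
    have := Matrix.rank_le_card_height (cfnMatrix n t)
    rwa [hcard] at this
  have hge : n ≤ (cfnMatrix n t).rank := by
    calc n = B.rank := hrankB.symm
      _ = (cfnMatrix n t * P).rank := by rw [hMP]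
      _ ≤ (cfnMatrix n t).rank := Matrix.rank_mul_le_left _ _
  omega

/-- For a rooted binary phylogenetic tree on `n` leaves, the matrix `A_T` has
rank `n` (the number of its rows). -/
theorem cfnMatrix_rank (n : ℕ) (t : PhyloTree) (ht : PhyloTree.IsPhylo n t) :
    (cfnMatrix n t).rank = n :=
  cfnMatrix_rank' n t ht
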